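/- arXiv:1802.06570 — 2 statements merged into one kernel-verified Lean document; each statement's English description precedes it below -/
import Mathlib

section
/- Let A ∈ SL(2,Z) define the second-factor dynamics, and define f_N : T^2 × T^2 → T^2 × T^2 by f_N(x,y,z,w) = (s_N(x,y) + P_x(A^N(z,w)), A^{2N}(z,w)), where P_x is projection onto the first coordinate. Then the inverse map f_N^{-1} is conjugated by the involution I(x,y,z,w) = (y,x,z,w) to the map (x,y,z,w) ↦ (s_N(x,y) + P_x(A^{-N}(z,w)), A^{-2N}(z,w)). -/
noncomputable section

/-- The circle `ℝ/2πℤ`. -/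
abbrev Torus1 : Type := AddCircle (2 * Real.pi)

/-- `sin` descends to the circle `ℝ/2πℤ`. -/
noncomputable def sinT : Torus1 → ℝ := Real.sin_periodic.lift

/-- The standard map `s_N(x,y) = (2x - y + N sin x, x)` on the 2-torus. -/
noncomputable def stdMap (N : ℝ) (p : Torus1 × Torus1) : Torus1 × Torus1 :=
  ((2 : ℤ) • p.1 - p.2 + ((N * sinT p.1 : ℝ) : Torus1), p.1)

/-- The action of an integer matrix on the 2-torus. -/
def matAct (B : Matrix (Fin 2) (Fin 2) ℤ) (p : Torus1 × Torus1) : Torus1 × Torus1 :=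
  (B 0 0 • p.1 + B 0 1 • p.2, B 1 0 • p.1 + B 1 1 • p.2)

/-- The projection `P_x(a,b) = (a,0)` on the 2-torus. -/
def Px (p : Torus1 × Torus1) : Torus1 × Torus1 := (p.1, 0)

/-- The Berger–Carrasco map
`f_N(x,y,z,w) = (s_N(x,y) + P_x(A^N(z,w)), A^{2N}(z,w))` on `T⁴ = T² × T²`. -/
noncomputable def fBC (N : ℕ) (A : Matrix.SpecialLinearGroup (Fin 2) ℤ)
    (m : (Torus1 × Torus1) × (Torus1 × Torus1)) : (Torus1 × Torus1) × (Torus1 × Torus1) :=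
  (stdMap N m.1 +
      Px (matAct ((A ^ N : Matrix.SpecialLinearGroup (Fin 2) ℤ) : Matrix (Fin 2) (Fin 2) ℤ) m.2),
    matAct ((A ^ (2 * N) : Matrix.SpecialLinearGroup (Fin 2) ℤ) : Matrix (Fin 2) (Fin 2) ℤ) m.2)

/-- The map `(x,y,z,w) ↦ (s_N(x,y) + P_x(A^{-N}(z,w)), A^{-2N}(z,w))`. -/
noncomputable def gBC (N : ℕ) (A : Matrix.SpecialLinearGroup (Fin 2) ℤ)
    (m : (Torus1 × Torus1) × (Torus1 × Torus1)) : (Torus1 × Torus1) × (Torus1 × Torus1) :=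
  (stdMap N m.1 +
      Px (matAct ((A⁻¹ ^ N : Matrix.SpecialLinearGroup (Fin 2) ℤ) : Matrix (Fin 2) (Fin 2) ℤ) m.2),
    matAct ((A⁻¹ ^ (2 * N) : Matrix.SpecialLinearGroup (Fin 2) ℤ) : Matrix (Fin 2) (Fin 2) ℤ) m.2)

/-- The involution `I(x,y,z,w) = (y,x,z,w)`. -/
def invol (m : (Torus1 × Torus1) × (Torus1 × Torus1)) :
    (Torus1 × Torus1) × (Torus1 × Torus1) := ((m.1.2, m.1.1), m.2)

lemma matAct_mul (B C : Matrix (Fin 2) (Fin 2) ℤ) (p : Torus1 × Torus1) :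
    matAct (B * C) p = matAct B (matAct C p) := by
  simp only [matAct, Matrix.mul_apply, Fin.sum_univ_two, add_smul, mul_smul, smul_add]
  exact Prod.ext (by abel) (by abel)

lemma matAct_one (p : Torus1 × Torus1) : matAct 1 p = p := by
  simp [matAct, Matrix.one_apply]

lemma matAct_sl_mul (B C : Matrix.SpecialLinearGroup (Fin 2) ℤ) (p : Torus1 × Torus1) :
    matAct ((B * C : Matrix.SpecialLinearGroup (Fin 2) ℤ) : Matrix (Fin 2) (Fin 2) ℤ) p
      = matAct (B : Matrix (Fin 2) (Fin 2) ℤ) (matAct (C : Matrix (Fin 2) (Fin 2) ℤ) p) := by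
  rw [Matrix.SpecialLinearGroup.coe_mul, matAct_mul]

/-- `f_N⁻¹` is conjugated by the involution `I(x,y,z,w) = (y,x,z,w)` to the map
`(x,y,z,w) ↦ (s_N(x,y) + P_x(A^{-N}(z,w)), A^{-2N}(z,w))`; that is,
`I ∘ g ∘ I` is a two-sided inverse of `f_N`. -/
theorem fBC_inverse_conjugated (N : ℕ) (A : Matrix.SpecialLinearGroup (Fin 2) ℤ) :
    Function.LeftInverse (invol ∘ gBC N A ∘ invol) (fBC N A) ∧
      Function.RightInverse (invol ∘ gBC N A ∘ invol) (fBC N A) := by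
  have h1 : A⁻¹ ^ (2 * N) * A ^ (2 * N) = 1 := by group
  have h2 : A ^ (2 * N) * A⁻¹ ^ (2 * N) = 1 := by group
  have h3 : A⁻¹ ^ N * A ^ (2 * N) = A ^ N := by group
  have h4 : A ^ N * A⁻¹ ^ (2 * N) = A⁻¹ ^ N := by group
  constructor
  · intro m
    obtain ⟨⟨x, y⟩, p⟩ := m
    simp only [fBC, gBC, invol, Function.comp_apply, ← matAct_sl_mul, h1, h3,
      Matrix.SpecialLinearGroup.coe_one, matAct_one, stdMap, Px, Prod.fst_add, Prod.snd_add,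
      add_zero]
    refine Prod.ext (Prod.ext ?_ ?_) rfl <;> simp only [Prod.mk_add_mk, add_zero] <;> module
  · intro m
    obtain ⟨⟨x, y⟩, p⟩ := m
    simp only [fBC, gBC, invol, Function.comp_apply, ← matAct_sl_mul, h2, h4,
      Matrix.SpecialLinearGroup.coe_one, matAct_one, stdMap, Px, Prod.fst_add, Prod.snd_add,
      add_zero]
    refine Prod.ext (Prod.ext ?_ ?_) rfl <;> simp only [Prod.mk_add_mk, add_zero] <;> module

end
end

section
/- For V a one-dimensional subspace of R^2 and θ > 0, let C_θ(V) = {w ∈ R^2 : θ‖w_V‖ ≥ ‖w_{V⊥}‖} be the cone of size θ around V, where w = w_V + w_{V⊥} is the orthogonal decomposition. If V is spanned by a unit vector (x, x/θ_1) with x > 0 (so V lies on the boundary of the horizontal cone of size 1/θ_1, with 0 < θ_1 ≤ 1), then the cone C_{θ_1/2}(V) is contained in the horizontal cone C^{hor}_{(θ_1^2+2)/θ_1}, and in particular in C^{hor}_{4/θ_1}. -/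
/-- Cones in `ℝ²`: if `V` is spanned by a unit vector `(x, x/θ₁)` with `x > 0`
(so `V` lies on the boundary of the horizontal cone of size `1/θ₁`, `0 < θ₁ ≤ 1`),
then the cone `C_{θ₁/2}(V) = {w : (θ₁/2)‖proj_V w‖ ≥ ‖proj_{V⊥} w‖}` is contained
in the horizontal cone of size `(θ₁²+2)/θ₁`, and in particular in that of size
`4/θ₁`.  Here `proj_V w = ⟨w, v⟩ v` and `proj_{V⊥} w = ⟨w, v⊥⟩ v⊥` with
`v = (x, x/θ₁)` a unit vector and `v⊥ = (-(x/θ₁), x)`. -/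
theorem cone_containment (θ₁ : ℝ) (h0 : 0 < θ₁) (h1 : θ₁ ≤ 1) (x : ℝ) (hx : 0 < x)
    (hunit : x ^ 2 + (x / θ₁) ^ 2 = 1) (w : ℝ × ℝ)
    (hw : |(-(x / θ₁)) * w.1 + x * w.2| ≤ (θ₁ / 2) * |w.1 * x + w.2 * (x / θ₁)|) :
    |w.2| ≤ ((θ₁ ^ 2 + 2) / θ₁) * |w.1| ∧ |w.2| ≤ (4 / θ₁) * |w.1| := by
  set a := w.1
  set b := w.2
  have hθ := h0.ne'
  have e1 : (-(x / θ₁)) * a + x * b = x * (b - a / θ₁) := by ring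
  have e2 : a * x + b * (x / θ₁) = x * (a + b / θ₁) := by ring
  have h2 : |b - a / θ₁| ≤ (θ₁ / 2) * |a + b / θ₁| := by
    rw [e1, e2, abs_mul, abs_mul, abs_of_pos hx, mul_left_comm] at hw
    exact le_of_mul_le_mul_left hw hx
  have t1 : |b| ≤ |b - a / θ₁| + |a| / θ₁ := by
    calc |b| = |(b - a / θ₁) + a / θ₁| := by ring_nf
    _ ≤ |b - a / θ₁| + |a / θ₁| := abs_add_le _ _
    _ = |b - a / θ₁| + |a| / θ₁ := by rw [abs_div, abs_of_pos h0]
  have t2 : |a + b / θ₁| ≤ |a| + |b| / θ₁ := by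
    calc |a + b / θ₁| ≤ |a| + |b / θ₁| := abs_add_le _ _
    _ = |a| + |b| / θ₁ := by rw [abs_div, abs_of_pos h0]
  have key : |b| ≤ ((θ₁ ^ 2 + 2) / θ₁) * |a| := by
    have h3 : |b| ≤ (θ₁ / 2) * (|a| + |b| / θ₁) + |a| / θ₁ := by
      have := mul_le_mul_of_nonneg_left t2 (by positivity : (0:ℝ) ≤ θ₁ / 2)
      linarith
    have h4 : θ₁ / 2 * (|a| + |b| / θ₁) = θ₁ * |a| / 2 + |b| / 2 := by
      field_simp
    rw [h4] at h3
    rw [div_mul_eq_mul_div, le_div_iff₀ h0]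
    have h6 := mul_le_mul_of_nonneg_right h3 h0.le
    have h5 : (θ₁ * |a| / 2 + |b| / 2 + |a| / θ₁) * θ₁
        = θ₁ ^ 2 * |a| / 2 + |b| * θ₁ / 2 + |a| := by field_simp
    rw [h5] at h6
    linarith
  refine ⟨key, key.trans ?_⟩
  have : (θ₁ ^ 2 + 2) / θ₁ ≤ 4 / θ₁ := by gcongr; nlinarith
  exact mul_le_mul_of_nonneg_right this (abs_nonneg a)
end
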